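/- For all natural numbers n and a, the number of 2×n matrices with entries in a 3-letter alphabet having the same number of occurrences of the letter 1 in each row and exactly a more occurrences of the letter 3 in the top row than in the bottom row equals ∑_{k=0}^{n} C(n,k)^2 · C(2k, k−a), where C(2k, k−a) is interpreted as 0 when k < a. Formally: the number of pairs of words w, w' : Fin n → Fin 3 such that #{i : w(i) = 0} = #{i : w'(i) = 0} and #{i : w(i) = 2} = #{i : w'(i) = 2} + a equals ∑_{k=0}^{n} C(n,k)^2 · C(2k, k−a). -/

import Mathlib

open Finset

lemma wcount (n j t : ℕ) :
    ((univ : Finset (Fin n → Fin 3)).filter (fun w =>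
        (univ.filter (fun i => w i = 0)).card = j ∧
        (univ.filter (fun i => w i = 2)).card = t)).card
      = n.choose j * (n - j).choose t := by
  have h := Finset.card_nbij'
    (s := (univ : Finset (Fin n → Fin 3)).filter (fun w =>
        (univ.filter (fun i => w i = 0)).card = j ∧
        (univ.filter (fun i => w i = 2)).card = t))
    (t := (powersetCard j (univ : Finset (Fin n))).sigma (fun S => powersetCard t Sᶜ))
    (fun w => ⟨univ.filter (fun i => w i = 0), univ.filter (fun i => w i = 2)⟩)
    (fun p i => if i ∈ p.1 then 0 else if i ∈ p.2 then 2 else 1)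
    ?_ ?_ ?_ ?_
  · rw [h, Finset.card_sigma]
    rw [Finset.sum_congr rfl (fun S hS => ?_), Finset.sum_const, Finset.card_powersetCard,
      card_univ, Fintype.card_fin, smul_eq_mul]
    rw [Finset.card_powersetCard, Finset.card_compl, Fintype.card_fin,
      (Finset.mem_powersetCard.mp hS).2]
  · intro w hw
    simp only [Finset.mem_coe, Finset.mem_filter, Finset.mem_univ, true_and] at hw
    simp only [Finset.mem_coe, Finset.mem_sigma, Finset.mem_powersetCard]
    refine ⟨⟨Finset.subset_univ _, hw.1⟩, ?_, hw.2⟩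
    intro i hi
    simp only [Finset.mem_filter, Finset.mem_univ, true_and] at hi
    simp only [Finset.mem_compl, Finset.mem_filter, Finset.mem_univ, true_and]
    rw [hi]; decide
  · intro p hp
    simp only [Finset.mem_coe, Finset.mem_sigma, Finset.mem_powersetCard] at hp
    simp only [Finset.mem_coe, Finset.mem_filter, Finset.mem_univ, true_and]
    constructor
    · rw [← hp.1.2]; congr 1; ext i
      simp only [Finset.mem_filter, Finset.mem_univ, true_and]
      constructor
      · intro h; by_contra hi
        simp [hi] at h
        split at h <;> simp_all
      · intro h; simp [h]
    · rw [← hp.2.2]; congr 1; ext i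
      simp only [Finset.mem_filter, Finset.mem_univ, true_and]
      constructor
      · intro h
        by_cases hi : i ∈ p.1
        · simp [hi] at h
        · simp [hi] at h
          by_contra h2; simp [h2] at h
      · intro h
        have hi : i ∉ p.1 := by
          have := hp.2.1 h
          simpa using this
        simp [hi, h]
  · intro w hw
    simp only [Finset.mem_coe, Finset.mem_filter, Finset.mem_univ, true_and] at hw
    funext i
    by_cases h0 : w i = 0
    · simp [h0]
    · by_cases h2 : w i = 2
      · simp [h0, h2]
      · simp [h0, h2]; omega
  · intro p hp
    simp only [Finset.mem_coe, Finset.mem_sigma, Finset.mem_powersetCard] at hp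
    have e1 : (univ.filter (fun i =>
        (if i ∈ p.1 then (0:Fin 3) else if i ∈ p.2 then 2 else 1) = 0)) = p.1 := by
      ext i
      simp only [Finset.mem_filter, Finset.mem_univ, true_and]
      constructor
      · intro h; by_contra hi; simp [hi] at h; split at h <;> simp_all
      · intro h; simp [h]
    have e2 : (univ.filter (fun i =>
        (if i ∈ p.1 then (0:Fin 3) else if i ∈ p.2 then 2 else 1) = 2)) = p.2 := by
      ext i
      simp only [Finset.mem_filter, Finset.mem_univ, true_and]
      constructor
      · intro h
        by_cases hi : i ∈ p.1
        · simp [hi] at h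
        · simp [hi] at h
          by_contra h2; simp [h2] at h
      · intro h
        have hi : i ∉ p.1 := by
          have := hp.2.1 h; simpa using this
        simp [hi, h]
    exact Sigma.ext e1 (heq_of_eq e2)


lemma vsum (a k m : ℕ) (hm : k < m) :
    ∑ t ∈ range m, (k.choose t * (if a ≤ t then k.choose (t - a) else 0))
      = if a ≤ k then (2 * k).choose (k - a) else 0 := by
  by_cases ha : a ≤ k
  · simp only [ha, if_true]
    have hrhs : (2 * k).choose (k - a) = ∑ i ∈ range (k - a + 1), k.choose i * k.choose (k - a - i) := by
      rw [two_mul, Nat.add_choose_eq, Finset.Nat.sum_antidiagonal_eq_sum_range_succ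
        (fun i j => k.choose i * k.choose j)]
    rw [hrhs]
    have hsub : Finset.Ico a (k + 1) ⊆ range m := by
      intro x hx; simp only [Finset.mem_Ico] at hx; simp only [Finset.mem_range]; omega
    rw [← Finset.sum_subset hsub (fun x _ hx => ?_), Finset.sum_Ico_eq_sum_range]
    · apply Finset.sum_congr (by congr 1; omega)
      intro i hi
      simp only [Finset.mem_range] at hi
      have h1 : a ≤ a + i := Nat.le_add_right a i
      rw [if_pos h1]
      have : a + i - a = i := by omega
      rw [this]
      have h2 : k - a - i = k - (a + i) := by omega
      rw [h2, Nat.choose_symm (by omega), mul_comm]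
    · simp only [Finset.mem_Ico, not_and_or, not_le, not_lt] at hx
      rcases hx with h | h
      · rw [if_neg (by omega), mul_zero]
      · rw [Nat.choose_eq_zero_of_lt (by omega), zero_mul]
  · simp only [ha, if_false]
    apply Finset.sum_eq_zero
    intro t ht
    by_cases h : a ≤ t
    · rw [Nat.choose_eq_zero_of_lt (by omega), zero_mul]
    · rw [if_neg h, mul_zero]

theorem generalized_abelian_matrices_count (n a : ℕ) :
    ((Finset.univ : Finset ((Fin n → Fin 3) × (Fin n → Fin 3))).filter (fun p =>
        (Finset.univ.filter (fun i => p.1 i = 0)).card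
          = (Finset.univ.filter (fun i => p.2 i = 0)).card ∧
        (Finset.univ.filter (fun i => p.1 i = 2)).card
          = (Finset.univ.filter (fun i => p.2 i = 2)).card + a)).card
      = ∑ k ∈ range (n + 1),
          (n.choose k) ^ 2 * (if a ≤ k then (2 * k).choose (k - a) else 0) := by
  have key : ((Finset.univ : Finset ((Fin n → Fin 3) × (Fin n → Fin 3))).filter (fun p =>
        (Finset.univ.filter (fun i => p.1 i = 0)).card
          = (Finset.univ.filter (fun i => p.2 i = 0)).card ∧
        (Finset.univ.filter (fun i => p.1 i = 2)).card
          = (Finset.univ.filter (fun i => p.2 i = 2)).card + a)).card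
      = ∑ jt ∈ (range (n+1)) ×ˢ (range (n+1)),
          (n.choose jt.1 * (n - jt.1).choose jt.2) *
          (if a ≤ jt.2 then n.choose jt.1 * (n - jt.1).choose (jt.2 - a) else 0) := by
    rw [Finset.card_eq_sum_card_fiberwise
      (f := fun p : (Fin n → Fin 3) × (Fin n → Fin 3) =>
        ((univ.filter (fun i => p.1 i = 0)).card, (univ.filter (fun i => p.1 i = 2)).card))
      (t := (range (n+1)) ×ˢ (range (n+1)))
      (fun p _ => by
        simp only [Finset.mem_coe, Finset.mem_product, Finset.mem_range]
        exact ⟨Nat.lt_succ_of_le (le_trans (Finset.card_filter_le _ _) (by simp)),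
          Nat.lt_succ_of_le (le_trans (Finset.card_filter_le _ _) (by simp))⟩)]
    apply Finset.sum_congr rfl
    rintro ⟨j, t⟩ hjt
    have hfib : (((Finset.univ : Finset ((Fin n → Fin 3) × (Fin n → Fin 3))).filter (fun p =>
        (Finset.univ.filter (fun i => p.1 i = 0)).card
          = (Finset.univ.filter (fun i => p.2 i = 0)).card ∧
        (Finset.univ.filter (fun i => p.1 i = 2)).card
          = (Finset.univ.filter (fun i => p.2 i = 2)).card + a)).filter (fun p =>
        ((univ.filter (fun i => p.1 i = 0)).card, (univ.filter (fun i => p.1 i = 2)).card) = (j, t)))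
      = ((univ : Finset (Fin n → Fin 3)).filter (fun w =>
            (univ.filter (fun i => w i = 0)).card = j ∧
            (univ.filter (fun i => w i = 2)).card = t)) ×ˢ
        ((univ : Finset (Fin n → Fin 3)).filter (fun w =>
            (univ.filter (fun i => w i = 0)).card = j ∧
            (univ.filter (fun i => w i = 2)).card + a = t)) := by
      ext p
      simp only [Finset.mem_filter, Finset.mem_product, Finset.mem_univ, true_and,
        Prod.mk.injEq]
      constructor
      · rintro ⟨⟨h1, h2⟩, h3, h4⟩
        exact ⟨⟨h3, h4⟩, by omega, by omega⟩
      · rintro ⟨⟨h1, h2⟩, h3, h4⟩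
        exact ⟨⟨by omega, by omega⟩, h1, h2⟩
    rw [hfib, Finset.card_product, wcount]
    congr 1
    by_cases ha : a ≤ t
    · rw [if_pos ha, ← wcount n j (t - a)]
      congr 1
      apply Finset.filter_congr
      intro w _
      constructor
      · rintro ⟨h1, h2⟩; exact ⟨h1, by omega⟩
      · rintro ⟨h1, h2⟩; exact ⟨h1, by omega⟩
    · rw [if_neg ha]
      rw [Finset.card_eq_zero]
      apply Finset.filter_eq_empty_iff.mpr
      intro w _
      rintro ⟨h1, h2⟩; omega
  rw [key, Finset.sum_product]
  have inner : ∀ j ∈ range (n+1),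
      ∑ t ∈ range (n+1), (n.choose j * (n - j).choose t) *
        (if a ≤ t then n.choose j * (n - j).choose (t - a) else 0)
      = (n.choose j) ^ 2 * (if a ≤ n - j then (2 * (n - j)).choose (n - j - a) else 0) := by
    intro j hj
    simp only [Finset.mem_range] at hj
    rw [← vsum a (n - j) (n + 1) (by omega), Finset.mul_sum]
    apply Finset.sum_congr rfl
    intro t _
    by_cases h : a ≤ t
    · simp only [h, if_true]; ring
    · simp only [h, if_false]; ring
  rw [Finset.sum_congr rfl inner,
    ← Finset.sum_range_reflect (fun k => (n.choose k) ^ 2 *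
      (if a ≤ k then (2 * k).choose (k - a) else 0)) (n + 1)]
  apply Finset.sum_congr rfl
  intro j hj
  simp only [Finset.mem_range] at hj
  have h1 : n + 1 - 1 - j = n - j := by omega
  simp only [h1]
  rw [Nat.choose_symm (by omega : j ≤ n)]
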